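/- arXiv:quant-ph/0604023 — 5 statements merged into one kernel-verified Lean document; each statement's English description precedes it below -/
import Mathlib

section
/- Let q ∈ ℝ³ with ‖q‖ < 1. Then for every p ∈ ℝ³ with ‖p‖ = 1 one has φ_{−q}(φ_q(p)) = p and φ_q(φ_{−q}(p)) = p; in particular φ_q is a bijection of the unit sphere S² onto itself with inverse φ_{−q}. -/
noncomputable def phiMap (q p : EuclideanSpace ℝ (Fin 3)) : EuclideanSpace ℝ (Fin 3) :=
  (1 + ‖q‖ ^ 2 + 2 * (inner ℝ q p : ℝ))⁻¹ •
    ((1 - ‖q‖ ^ 2) • p + (2 * (1 + (inner ℝ q p : ℝ))) • q)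

lemma phi_denom_pos (q p : EuclideanSpace ℝ (Fin 3)) (hq : ‖q‖ < 1) (hp : ‖p‖ = 1) :
    0 < 1 + ‖q‖ ^ 2 + 2 * (inner ℝ q p : ℝ) := by
  have h := abs_real_inner_le_norm q p
  rw [hp, mul_one] at h
  obtain ⟨h1, h2⟩ := abs_le.mp h
  nlinarith [norm_nonneg q]

lemma phi_norm (q p : EuclideanSpace ℝ (Fin 3)) (hq : ‖q‖ < 1) (hp : ‖p‖ = 1) :
    ‖phiMap q p‖ = 1 := by
  have hD := phi_denom_pos q p hq hp
  have h2 : ‖phiMap q p‖ ^ 2 = 1 := by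
    rw [← real_inner_self_eq_norm_sq]
    simp only [phiMap, inner_add_left, inner_add_right, real_inner_smul_left,
      real_inner_smul_right]
    rw [real_inner_self_eq_norm_sq p, real_inner_self_eq_norm_sq q,
      real_inner_comm p q, hp]
    rw [real_inner_comm p q] at hD
    generalize (inner ℝ p q : ℝ) = t at hD ⊢
    generalize ‖q‖ = a at hD ⊢
    field_simp [hD.ne']
    ring
  nlinarith [norm_nonneg (phiMap q p)]

lemma phi_inv (q p : EuclideanSpace ℝ (Fin 3)) (hq : ‖q‖ < 1) (hp : ‖p‖ = 1) :
    phiMap (-q) (phiMap q p) = p := by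
  have hD := phi_denom_pos q p hq hp
  have hφ := phi_norm q p hq hp
  have hnq : ‖(-q : EuclideanSpace ℝ (Fin 3))‖ < 1 := by simpa using hq
  have hD' := phi_denom_pos (-q) (phiMap q p) hnq hφ
  have hip : (inner ℝ (-q) (phiMap q p) : ℝ) =
      -((1 + ‖q‖ ^ 2 + 2 * (inner ℝ q p : ℝ))⁻¹ *
        ((1 - ‖q‖ ^ 2) * (inner ℝ q p : ℝ) + 2 * (1 + (inner ℝ q p : ℝ)) * ‖q‖ ^ 2)) := by
    simp only [phiMap, inner_neg_left, inner_add_right, real_inner_smul_right,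
      real_inner_self_eq_norm_sq]
  rw [norm_neg, hip] at hD'
  have ha0 : (0:ℝ) ≤ ‖q‖ := norm_nonneg q
  conv_lhs => rw [phiMap]
  rw [norm_neg, hip]
  simp only [phiMap]
  match_scalars <;>
  · generalize (inner ℝ q p : ℝ) = t at hD hD' ⊢
    generalize ‖q‖ = a at hq ha0 hD hD' ⊢
    have ha1 : (1:ℝ) - a ^ 2 ≠ 0 := by nlinarith
    have hrw : 1 + a ^ 2 + 2 * -((1 + a ^ 2 + 2 * t)⁻¹ * ((1 - a ^ 2) * t + 2 * (1 + t) * a ^ 2))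
        = (1 - a ^ 2) ^ 2 * (1 + a ^ 2 + 2 * t)⁻¹ := by
      field_simp
      ring
    rw [hrw]
    field_simp
    all_goals ring

theorem phi_neg_q_is_inverse (q : EuclideanSpace ℝ (Fin 3)) (hq : ‖q‖ < 1) :
    (∀ p : EuclideanSpace ℝ (Fin 3), ‖p‖ = 1 →
      phiMap (-q) (phiMap q p) = p ∧ phiMap q (phiMap (-q) p) = p) ∧
    Set.BijOn (phiMap q) {p : EuclideanSpace ℝ (Fin 3) | ‖p‖ = 1}
      {p : EuclideanSpace ℝ (Fin 3) | ‖p‖ = 1} ∧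
    Set.InvOn (phiMap (-q)) (phiMap q) {p : EuclideanSpace ℝ (Fin 3) | ‖p‖ = 1}
      {p : EuclideanSpace ℝ (Fin 3) | ‖p‖ = 1} := by
  have hnq : ‖(-q : EuclideanSpace ℝ (Fin 3))‖ < 1 := by simpa using hq
  have hinv2 : ∀ p : EuclideanSpace ℝ (Fin 3), ‖p‖ = 1 →
      phiMap q (phiMap (-q) p) = p := by
    intro p hp
    have := phi_inv (-q) p hnq hp
    rwa [neg_neg] at this
  have hmaps : Set.MapsTo (phiMap q) {p : EuclideanSpace ℝ (Fin 3) | ‖p‖ = 1}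
      {p : EuclideanSpace ℝ (Fin 3) | ‖p‖ = 1} := fun p hp => phi_norm q p hq hp
  have hmaps' : Set.MapsTo (phiMap (-q)) {p : EuclideanSpace ℝ (Fin 3) | ‖p‖ = 1}
      {p : EuclideanSpace ℝ (Fin 3) | ‖p‖ = 1} := fun p hp => phi_norm (-q) p hnq hp
  have hInv : Set.InvOn (phiMap (-q)) (phiMap q) {p : EuclideanSpace ℝ (Fin 3) | ‖p‖ = 1}
      {p : EuclideanSpace ℝ (Fin 3) | ‖p‖ = 1} :=
    ⟨fun p hp => phi_inv q p hq hp, fun p hp => hinv2 p hp⟩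
  exact ⟨fun p hp => ⟨phi_inv q p hq hp, hinv2 p hp⟩, hInv.bijOn hmaps hmaps', hInv⟩
end

section
/- Let q ∈ ℝ³ with ‖q‖ < 1 and x ∈ ℝ³ with ‖x‖ = 1. Then the following identity of complex 2×2 matrices holds: (I + σ(q))(I + σ(x))(I + σ(q)) = (1 + ‖q‖² + 2⟨q,x⟩) · (I + σ(φ_q(x))). That is, the Lorentz boost P(q) = I + σ(q) acts on null directions exactly by the Möbius map φ_q of the sphere, with place-dependent scalar factor λ(q,x) proportional to 1 + ‖q‖² + 2⟨q,x⟩. -/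
open Matrix

noncomputable def pauliSigma (x : EuclideanSpace ℝ (Fin 3)) : Matrix (Fin 2) (Fin 2) ℂ :=
  (x 0 : ℂ) • !![0, 1; 1, 0] + (x 1 : ℂ) • !![0, -Complex.I; Complex.I, 0] +
    (x 2 : ℂ) • !![1, 0; 0, -1]

lemma key_boost (a0 a1 a2 b0 b1 b2 e : ℂ)
    (he : e * (1 + (a0^2 + a1^2 + a2^2) + 2 * (a0*b0 + a1*b1 + a2*b2)) = 1) :
    !![1 + a2, a0 - a1 * Complex.I; a0 + a1 * Complex.I, 1 - a2] *
      !![1 + b2, b0 - b1 * Complex.I; b0 + b1 * Complex.I, 1 - b2] *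
      !![1 + a2, a0 - a1 * Complex.I; a0 + a1 * Complex.I, 1 - a2] =
    (1 + (a0^2 + a1^2 + a2^2) + 2 * (a0*b0 + a1*b1 + a2*b2)) •
      !![1 + e * ((1 - (a0^2 + a1^2 + a2^2)) * b2 + 2 * (1 + (a0*b0 + a1*b1 + a2*b2)) * a2),
         e * ((1 - (a0^2 + a1^2 + a2^2)) * b0 + 2 * (1 + (a0*b0 + a1*b1 + a2*b2)) * a0)
           - e * ((1 - (a0^2 + a1^2 + a2^2)) * b1 + 2 * (1 + (a0*b0 + a1*b1 + a2*b2)) * a1) * Complex.I;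
         e * ((1 - (a0^2 + a1^2 + a2^2)) * b0 + 2 * (1 + (a0*b0 + a1*b1 + a2*b2)) * a0)
           + e * ((1 - (a0^2 + a1^2 + a2^2)) * b1 + 2 * (1 + (a0*b0 + a1*b1 + a2*b2)) * a1) * Complex.I,
         1 - e * ((1 - (a0^2 + a1^2 + a2^2)) * b2 + 2 * (1 + (a0*b0 + a1*b1 + a2*b2)) * a2)] := by
  rw [Matrix.mul_fin_two, Matrix.mul_fin_two]
  ext i j
  fin_cases i <;> fin_cases j <;> simp [smul_eq_mul]
  · linear_combination (-2*a1*b1 - 2*a1*a2*b1 - a1^2 + a1^2*b2) * Complex.I_sq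
      - ((1 - (a0^2 + a1^2 + a2^2)) * b2 + 2 * (1 + (a0*b0 + a1*b1 + a2*b2)) * a2) * he
  · linear_combination (a1^2*b1*Complex.I + a1^2*b0 - 2*a0*a1*b1) * Complex.I_sq
      - ((1 - (a0^2 + a1^2 + a2^2)) * b0 + 2 * (1 + (a0*b0 + a1*b1 + a2*b2)) * a0
         - ((1 - (a0^2 + a1^2 + a2^2)) * b1 + 2 * (1 + (a0*b0 + a1*b1 + a2*b2)) * a1) * Complex.I) * he
  · linear_combination (-a1^2*b1*Complex.I + a1^2*b0 - 2*a0*a1*b1) * Complex.I_sq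
      - ((1 - (a0^2 + a1^2 + a2^2)) * b0 + 2 * (1 + (a0*b0 + a1*b1 + a2*b2)) * a0
         + ((1 - (a0^2 + a1^2 + a2^2)) * b1 + 2 * (1 + (a0*b0 + a1*b1 + a2*b2)) * a1) * Complex.I) * he
  · linear_combination (-2*a1*b1 + 2*a1*a2*b1 - a1^2 - a1^2*b2) * Complex.I_sq
      + ((1 - (a0^2 + a1^2 + a2^2)) * b2 + 2 * (1 + (a0*b0 + a1*b1 + a2*b2)) * a2) * he

theorem boost_acts_as_moebius (q x : EuclideanSpace ℝ (Fin 3))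
    (hq : ‖q‖ < 1) (hx : ‖x‖ = 1) :
    (1 + pauliSigma q) * (1 + pauliSigma x) * (1 + pauliSigma q) =
      ((1 + ‖q‖ ^ 2 + 2 * (inner ℝ q x : ℝ) : ℝ) : ℂ) • (1 + pauliSigma (phiMap q x)) := by
  have h1 : ∀ v : EuclideanSpace ℝ (Fin 3), (1 : Matrix (Fin 2) (Fin 2) ℂ) + pauliSigma v =
      !![1 + (v 2 : ℂ), (v 0 : ℂ) - (v 1 : ℂ) * Complex.I;
         (v 0 : ℂ) + (v 1 : ℂ) * Complex.I, 1 - (v 2 : ℂ)] := by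
    intro v
    ext i j
    fin_cases i <;> fin_cases j <;>
      simp [pauliSigma, Matrix.one_apply] <;> ring
  have hq2 : ‖q‖ ^ 2 = q 0 ^ 2 + q 1 ^ 2 + q 2 ^ 2 := by
    rw [← real_inner_self_eq_norm_sq]
    simp only [PiLp.inner_apply, RCLike.inner_apply, conj_trivial, Fin.sum_univ_three]
    ring
  have hs : (inner ℝ q x : ℝ) = q 0 * x 0 + q 1 * x 1 + q 2 * x 2 := by
    simp [PiLp.inner_apply, Fin.sum_univ_three]
    ring
  have hqx : |(inner ℝ q x : ℝ)| ≤ ‖q‖ := by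
    calc |(inner ℝ q x : ℝ)| ≤ ‖q‖ * ‖x‖ := abs_real_inner_le_norm q x
    _ = ‖q‖ := by rw [hx, mul_one]
  have hD : (0:ℝ) < 1 + ‖q‖ ^ 2 + 2 * (inner ℝ q x : ℝ) := by
    nlinarith [abs_le.mp hqx, norm_nonneg q]
  have hD0 : (1 + ‖q‖ ^ 2 + 2 * (inner ℝ q x : ℝ)) ≠ 0 := ne_of_gt hD
  have hphi : ∀ i, (phiMap q x) i =
      (1 + ‖q‖ ^ 2 + 2 * (inner ℝ q x : ℝ))⁻¹ *
        ((1 - ‖q‖ ^ 2) * x i + (2 * (1 + (inner ℝ q x : ℝ))) * q i) := by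
    intro i; simp [phiMap]; ring
  have hDeq : ((1 + ‖q‖ ^ 2 + 2 * (inner ℝ q x : ℝ) : ℝ) : ℂ) =
      1 + ((q 0 : ℂ)^2 + (q 1 : ℂ)^2 + (q 2 : ℂ)^2)
        + 2 * ((q 0 : ℂ)*(x 0 : ℂ) + (q 1 : ℂ)*(x 1 : ℂ) + (q 2 : ℂ)*(x 2 : ℂ)) := by
    rw [hq2, hs]; push_cast; ring
  have he : (((1 + ‖q‖ ^ 2 + 2 * (inner ℝ q x : ℝ))⁻¹ : ℝ) : ℂ) *
      (1 + ((q 0 : ℂ)^2 + (q 1 : ℂ)^2 + (q 2 : ℂ)^2)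
        + 2 * ((q 0 : ℂ)*(x 0 : ℂ) + (q 1 : ℂ)*(x 1 : ℂ) + (q 2 : ℂ)*(x 2 : ℂ))) = 1 := by
    rw [← hDeq, ← Complex.ofReal_mul, inv_mul_cancel₀ hD0]
    norm_num
  have hkey := key_boost (q 0 : ℂ) (q 1 : ℂ) (q 2 : ℂ) (x 0 : ℂ) (x 1 : ℂ) (x 2 : ℂ)
    (((1 + ‖q‖ ^ 2 + 2 * (inner ℝ q x : ℝ))⁻¹ : ℝ) : ℂ) he
  have hphiC : ∀ i, (((phiMap q x) i : ℝ) : ℂ) =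
      (((1 + ‖q‖ ^ 2 + 2 * (inner ℝ q x : ℝ))⁻¹ : ℝ) : ℂ) *
        ((1 - ((q 0 : ℂ)^2 + (q 1 : ℂ)^2 + (q 2 : ℂ)^2)) * (x i : ℂ)
          + 2 * (1 + ((q 0 : ℂ)*(x 0 : ℂ) + (q 1 : ℂ)*(x 1 : ℂ) + (q 2 : ℂ)*(x 2 : ℂ))) * (q i : ℂ)) := by
    intro i
    rw [hphi i, hq2, hs]
    push_cast
    ring
  rw [h1 q, h1 x, h1 (phiMap q x), hkey, hDeq, hphiC 0, hphiC 1, hphiC 2]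
end

section
/- Let q ∈ ℝ³ with ‖q‖ < 1 and let x ∈ ℝ³ with ‖x‖ = 1. Then for every tangent vector u to the sphere at x (i.e. u ∈ ℝ³ with ⟨u,x⟩ = 0), the Fréchet derivative of φ_q at x satisfies ‖Dφ_q(x)·u‖ = ((1−‖q‖²)/(1+‖q‖²+2⟨q,x⟩)) · ‖u‖. Consequently φ_q is a conformal map of S²: for tangent vectors u, v at x, ⟨Dφ_q(x)·u, Dφ_q(x)·v⟩ = ((1−‖q‖²)/(1+‖q‖²+2⟨q,x⟩))² ⟨u,v⟩, so angles between tangent vectors are preserved, and the spherical area element transforms by dS′/dS = (1−‖q‖²)²/(1+‖q‖²+2⟨q,x⟩)². -/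
open scoped RealInnerProductSpace

local notation "E" => EuclideanSpace ℝ (Fin 3)

lemma phi_fderiv (q x : E) (hq : ‖q‖ < 1) (hx : ‖x‖ = 1) (u : E) :
    fderiv ℝ (phiMap q) x u =
      ((1 - ‖q‖ ^ 2) * (1 + ‖q‖ ^ 2 + 2 * (inner ℝ q x : ℝ))⁻¹) • u
      - (2 * (1 - ‖q‖ ^ 2) * (inner ℝ q u : ℝ) *
          ((1 + ‖q‖ ^ 2 + 2 * (inner ℝ q x : ℝ))⁻¹) ^ 2) • (q + x) := by
  set f : ℝ := 1 + ‖q‖ ^ 2 + 2 * (inner ℝ q x : ℝ) with hfdef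
  have hfnorm : f = ‖q + x‖ ^ 2 := by
    rw [norm_add_sq_real, hx]; ring
  have hqx : q + x ≠ 0 := by
    intro h
    have : x = -q := by linear_combination (norm := module) h
    rw [this, norm_neg] at hx
    linarith
  have hfpos : 0 < f := by
    rw [hfnorm]; exact pow_pos (norm_pos_iff.mpr hqx) 2
  have hfne : f ≠ 0 := ne_of_gt hfpos
  clear_value f
  -- derivative of the scalar function
  have hc : HasFDerivAt (fun p : E => 1 + ‖q‖ ^ 2 + 2 * (inner ℝ q p : ℝ))
      ((2 : ℝ) • (innerSL ℝ q : E →L[ℝ] ℝ)) x := by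
    refine ((hasFDerivAt_const (1 + ‖q‖ ^ 2 : ℝ) x).add
      (((innerSL ℝ q : E →L[ℝ] ℝ).hasFDerivAt (x := x)).const_mul (2 : ℝ))).congr_fderiv (by simp)
  have hcinv : HasFDerivAt (fun p : E => (1 + ‖q‖ ^ 2 + 2 * (inner ℝ q p : ℝ))⁻¹)
      ((-(f ^ 2)⁻¹) • ((2 : ℝ) • (innerSL ℝ q : E →L[ℝ] ℝ))) x :=
    (hasDerivAt_inv hfne).comp_hasFDerivAt_of_eq x hc hfdef
  have hg : HasFDerivAt (fun p : E => (1 - ‖q‖ ^ 2) • p + (2 * (1 + (inner ℝ q p : ℝ))) • q)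
      ((1 - ‖q‖ ^ 2) • (ContinuousLinearMap.id ℝ E)
        + (((2 : ℝ) • (innerSL ℝ q : E →L[ℝ] ℝ)).smulRight q)) x := by
    refine HasFDerivAt.add ?_ ?_
    · exact (hasFDerivAt_id (𝕜 := ℝ) x).const_smul (1 - ‖q‖ ^ 2)
    · have hc2 : HasFDerivAt (fun p : E => 2 * (1 + (inner ℝ q p : ℝ)))
          ((2 : ℝ) • (innerSL ℝ q : E →L[ℝ] ℝ)) x := by
        simpa using (((hasFDerivAt_const (1:ℝ) x).add
          ((innerSL ℝ q : E →L[ℝ] ℝ).hasFDerivAt (x := x))).const_mul (2 : ℝ))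
      exact hc2.smul_const q
  have hD := hcinv.smul hg
  have hphi : HasFDerivAt (phiMap q) _ x := hD
  rw [hphi.fderiv]
  simp only [ContinuousLinearMap.add_apply, ContinuousLinearMap.smul_apply,
    ContinuousLinearMap.smulRight_apply, ContinuousLinearMap.coe_smul',
    Pi.smul_apply, ContinuousLinearMap.id_apply, innerSL_apply_apply]
  rw [← hfdef]
  match_scalars <;> (try simp only [smul_eq_mul]) <;> field_simp [hfne] <;> (try simp only [hfdef, PiLp.inner_apply, RCLike.inner_apply, conj_trivial]) <;> ring

theorem phi_is_conformal (q x : EuclideanSpace ℝ (Fin 3))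
    (hq : ‖q‖ < 1) (hx : ‖x‖ = 1) :
    (∀ u : EuclideanSpace ℝ (Fin 3), (inner ℝ u x : ℝ) = 0 →
      ‖fderiv ℝ (phiMap q) x u‖ =
        ((1 - ‖q‖ ^ 2) / (1 + ‖q‖ ^ 2 + 2 * (inner ℝ q x : ℝ))) * ‖u‖) ∧
    (∀ u v : EuclideanSpace ℝ (Fin 3), (inner ℝ u x : ℝ) = 0 → (inner ℝ v x : ℝ) = 0 →
      (inner ℝ (fderiv ℝ (phiMap q) x u) (fderiv ℝ (phiMap q) x v) : ℝ) =
        ((1 - ‖q‖ ^ 2) / (1 + ‖q‖ ^ 2 + 2 * (inner ℝ q x : ℝ))) ^ 2 * (inner ℝ u v : ℝ)) := by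
  have hfnorm : (1 + ‖q‖ ^ 2 + 2 * (inner ℝ q x : ℝ)) = ‖q + x‖ ^ 2 := by
    rw [norm_add_sq_real, hx]; ring
  have hqx : q + x ≠ 0 := by
    intro h
    have : x = -q := by linear_combination (norm := module) h
    rw [this, norm_neg] at hx
    linarith
  have hfpos : 0 < (1 + ‖q‖ ^ 2 + 2 * (inner ℝ q x : ℝ)) := by
    rw [hfnorm]; exact pow_pos (norm_pos_iff.mpr hqx) 2
  have hfne : (1 + ‖q‖ ^ 2 + 2 * (inner ℝ q x : ℝ)) ≠ 0 := ne_of_gt hfpos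
  have hfne' : (1 + ‖q‖ ^ 2 + 2 * (inner ℝ q x : ℝ)) ≠ 0 := hfne
  simp only [PiLp.inner_apply, RCLike.inner_apply, conj_trivial] at hfne'
  have key : ∀ u v : EuclideanSpace ℝ (Fin 3),
      (inner ℝ u x : ℝ) = 0 → (inner ℝ v x : ℝ) = 0 →
      (inner ℝ (fderiv ℝ (phiMap q) x u) (fderiv ℝ (phiMap q) x v) : ℝ) =
        ((1 - ‖q‖ ^ 2) / (1 + ‖q‖ ^ 2 + 2 * (inner ℝ q x : ℝ))) ^ 2 * (inner ℝ u v : ℝ) := by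
    intro u v hu hv
    rw [phi_fderiv q x hq hx u, phi_fderiv q x hq hx v]
    have hxu : (inner ℝ x u : ℝ) = 0 := by rw [real_inner_comm]; exact hu
    have hxv : (inner ℝ x v : ℝ) = 0 := by rw [real_inner_comm]; exact hv
    have hww : (inner ℝ (q + x) (q + x) : ℝ) = 1 + ‖q‖ ^ 2 + 2 * (inner ℝ q x : ℝ) := by
      rw [real_inner_self_eq_norm_sq, ← hfnorm]
    have huw : (inner ℝ u (q + x) : ℝ) = inner ℝ q u := by
      rw [inner_add_right, hu, real_inner_comm]; ring
    have hwv : (inner ℝ (q + x) v : ℝ) = inner ℝ q v := by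
      rw [inner_add_left, hxv]; ring
    simp only [inner_sub_left, inner_sub_right, real_inner_smul_left, real_inner_smul_right,
      hww, huw, hwv]
    generalize hF : (1 + ‖q‖ ^ 2 + 2 * (inner ℝ q x : ℝ)) = F at hfne ⊢
    generalize (inner ℝ q u : ℝ) = A
    generalize (inner ℝ q v : ℝ) = B
    generalize (inner ℝ u v : ℝ) = C
    field_simp
    ring
  refine ⟨?_, key⟩
  intro u hu
  have h2 := key u u hu hu
  have hc : 0 ≤ (1 - ‖q‖ ^ 2) / (1 + ‖q‖ ^ 2 + 2 * (inner ℝ q x : ℝ)) := by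
    apply div_nonneg _ (le_of_lt hfpos)
    nlinarith [norm_nonneg q]
  have : ‖fderiv ℝ (phiMap q) x u‖ ^ 2 =
      (((1 - ‖q‖ ^ 2) / (1 + ‖q‖ ^ 2 + 2 * (inner ℝ q x : ℝ))) * ‖u‖) ^ 2 :=
    calc ‖fderiv ℝ (phiMap q) x u‖ ^ 2
        = (inner ℝ (fderiv ℝ (phiMap q) x u) (fderiv ℝ (phiMap q) x u) : ℝ) :=
          (real_inner_self_eq_norm_sq _).symm
      _ = ((1 - ‖q‖ ^ 2) / (1 + ‖q‖ ^ 2 + 2 * (inner ℝ q x : ℝ))) ^ 2 * (inner ℝ u u : ℝ) := h2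
      _ = (((1 - ‖q‖ ^ 2) / (1 + ‖q‖ ^ 2 + 2 * (inner ℝ q x : ℝ))) * ‖u‖) ^ 2 := by
          rw [real_inner_self_eq_norm_sq]; ring
  have h3 := congrArg Real.sqrt this
  rwa [Real.sqrt_sq (norm_nonneg _), Real.sqrt_sq (by positivity)] at h3
end

section
/- Let p, q ∈ ℝ³ with ‖p‖ < 1 and ‖q‖ < 1. Then the Möbius transformations φ_p and φ_q commute on the sphere, i.e. φ_p(φ_q(x)) = φ_q(φ_p(x)) for all x ∈ S², if and only if p and q are linearly dependent (p × q = 0, i.e. p and q are parallel or antiparallel). -/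
lemma inner_abs_bound (q x : EuclideanSpace ℝ (Fin 3)) (hq : ‖q‖ < 1) (hx : ‖x‖ = 1) :
    |(inner ℝ q x : ℝ)| < 1 := by
  have h := abs_real_inner_le_norm q x
  rw [hx, mul_one] at h
  linarith

lemma denom_pos (q x : EuclideanSpace ℝ (Fin 3)) (hq : ‖q‖ < 1) (hx : ‖x‖ = 1) :
    0 < 1 + ‖q‖ ^ 2 + 2 * (inner ℝ q x : ℝ) := by
  have h := inner_abs_bound q x hq hx
  have h1 := abs_real_inner_le_norm q x
  rw [hx, mul_one] at h1
  have h2 := neg_abs_le (inner ℝ q x : ℝ)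
  nlinarith [sq_nonneg (1 + (inner ℝ q x : ℝ)), sq_abs (inner ℝ q x : ℝ), abs_nonneg (inner ℝ q x : ℝ)]

lemma norm_phiMap (q x : EuclideanSpace ℝ (Fin 3)) (hq : ‖q‖ < 1) (hx : ‖x‖ = 1) :
    ‖phiMap q x‖ = 1 := by
  have hD := denom_pos q x hq hx
  set a := (inner ℝ q x : ℝ) with ha
  have hsq : ‖phiMap q x‖ ^ 2 = 1 := by
    rw [← real_inner_self_eq_norm_sq]
    simp only [phiMap, real_inner_smul_left, real_inner_smul_right, inner_add_left,
      inner_add_right]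
    rw [real_inner_self_eq_norm_sq, real_inner_self_eq_norm_sq, hx]
    rw [real_inner_comm q x]
    rw [← ha]
    field_simp
    ring
  have h0 := norm_nonneg (phiMap q x)
  have : (‖phiMap q x‖ - 1) * (‖phiMap q x‖ + 1) = 0 := by nlinarith
  rcases mul_eq_zero.1 this with h | h
  · linarith
  · linarith

lemma phiMap_smul_comm (q : EuclideanSpace ℝ (Fin 3)) (c : ℝ) (hq : ‖q‖ < 1)
    (hcq : ‖c • q‖ < 1) (x : EuclideanSpace ℝ (Fin 3)) (hx : ‖x‖ = 1) :
    phiMap (c • q) (phiMap q x) = phiMap q (phiMap (c • q) x) := by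
  have hx2 : ‖x‖ ^ 2 = 1 := by rw [hx]; norm_num
  set s := ‖q‖ ^ 2 with hs
  set a := (inner ℝ q x : ℝ) with ha
  have hns : ‖c • q‖ ^ 2 = c ^ 2 * s := by
    rw [norm_smul, mul_pow, Real.norm_eq_abs, sq_abs]
  have hD : 0 < 1 + s + 2 * a := denom_pos q x hq hx
  have hiax : (inner ℝ (c • q) x : ℝ) = c * a := by rw [real_inner_smul_left, ha]
  have hDp : 0 < 1 + c ^ 2 * s + 2 * (c * a) := by
    have := denom_pos (c • q) x hcq hx
    rw [hns, hiax] at this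
    exact this
  have hyform : phiMap q x = (1 + s + 2 * a)⁻¹ • ((1 - s) • x + (2 * (1 + a)) • q) := rfl
  have hzform : phiMap (c • q) x
      = (1 + c ^ 2 * s + 2 * (c * a))⁻¹ • ((1 - c ^ 2 * s) • x + (2 * (1 + c * a)) • (c • q)) := by
    rw [phiMap, hns, hiax]
  have hiy : (inner ℝ (c • q) (phiMap q x) : ℝ) = c * (a + a * s + 2 * s) / (1 + s + 2 * a) := by
    rw [hyform]
    rw [real_inner_smul_left, real_inner_smul_right, inner_add_right, real_inner_smul_right,
      real_inner_smul_right, real_inner_self_eq_norm_sq, ← hs, ← ha]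
    field_simp
    ring_nf
  have hiz : (inner ℝ q (phiMap (c • q) x) : ℝ)
      = (a + c ^ 2 * s * a + 2 * c * s) / (1 + c ^ 2 * s + 2 * (c * a)) := by
    rw [hzform]
    rw [real_inner_smul_right, inner_add_right, real_inner_smul_right,
      real_inner_smul_right, real_inner_smul_right, real_inner_self_eq_norm_sq, ← hs, ← ha]
    field_simp
    ring
  set N : ℝ := (1 + c ^ 2 * s) * (1 + s + 2 * a) + 2 * c * (a + a * s + 2 * s) with hN
  have hE1 := denom_pos (c • q) (phiMap q x) hcq (norm_phiMap q x hq hx)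
  rw [hns, hiy] at hE1
  have hNpos : 0 < N := by
    have heq : N = (1 + c ^ 2 * s + 2 * (c * (a + a * s + 2 * s) / (1 + s + 2 * a))) * (1 + s + 2 * a) := by
      field_simp
      ring
    rw [heq]
    exact mul_pos hE1 hD
  have hrw1 : 1 + c ^ 2 * s + 2 * (c * (a + a * s + 2 * s) / (1 + s + 2 * a)) = N / (1 + s + 2 * a) := by
    field_simp
    ring
  have hrw2 : 1 + s + 2 * ((a + c ^ 2 * s * a + 2 * c * s) / (1 + c ^ 2 * s + 2 * (c * a)))
      = N / (1 + c ^ 2 * s + 2 * (c * a)) := by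
    rw [eq_div_iff hDp.ne', add_mul, mul_assoc 2, div_mul_cancel₀ _ hDp.ne']
    ring
  calc phiMap (c • q) (phiMap q x)
      = (N / (1 + s + 2 * a))⁻¹ •
        ((1 - c ^ 2 * s) • ((1 + s + 2 * a)⁻¹ • ((1 - s) • x + (2 * (1 + a)) • q)) +
         (2 * (1 + c * (a + a * s + 2 * s) / (1 + s + 2 * a))) • (c • q)) := by
        rw [phiMap, hns, hiy, hrw1, hyform]
    _ = (N / (1 + c ^ 2 * s + 2 * (c * a)))⁻¹ •
        ((1 - s) • ((1 + c ^ 2 * s + 2 * (c * a))⁻¹ • ((1 - c ^ 2 * s) • x + (2 * (1 + c * a)) • (c • q))) +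
         (2 * (1 + (a + c ^ 2 * s * a + 2 * c * s) / (1 + c ^ 2 * s + 2 * (c * a)))) • q) := by
        clear_value N a s
        generalize hD2 : 1 + c ^ 2 * s + 2 * (c * a) = D2 at hDp ⊢
        match_scalars <;> field_simp <;> subst hD2 <;> ring
    _ = phiMap q (phiMap (c • q) x) := by
        rw [phiMap, hiz, hrw2, hzform, ← hs]

lemma phiMap_zero (v : EuclideanSpace ℝ (Fin 3)) : phiMap 0 v = v := by
  simp [phiMap]

lemma phiMap_fix (q : EuclideanSpace ℝ (Fin 3)) (hq0 : q ≠ 0) :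
    phiMap q (‖q‖⁻¹ • q) = ‖q‖⁻¹ • q := by
  have hn : ‖q‖ ≠ 0 := norm_ne_zero_iff.2 hq0
  have hiq : (inner ℝ q (‖q‖⁻¹ • q) : ℝ) = ‖q‖ := by
    rw [real_inner_smul_right, real_inner_self_eq_norm_sq]
    field_simp
  have hD : 1 + ‖q‖ ^ 2 + 2 * ‖q‖ ≠ 0 := by positivity
  rw [phiMap, hiq]
  match_scalars
  field_simp
  ring_nf

lemma exists_smul_of_cross_zero (p q : EuclideanSpace ℝ (Fin 3)) (hq0 : q ≠ 0)
    (h : crossProduct (p : Fin 3 → ℝ) (q : Fin 3 → ℝ) = 0) : ∃ c : ℝ, p = c • q := by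
  have h0 := congrFun h 0
  have h1 := congrFun h 1
  have h2 := congrFun h 2
  rw [cross_apply] at h0 h1 h2
  simp only [Matrix.cons_val_zero, Matrix.cons_val_one, Matrix.head_cons, Pi.zero_apply,
    Matrix.cons_val_two, Matrix.tail_cons] at h0 h1 h2
  have key : ∀ i j : Fin 3, p i * q j = p j * q i := by
    intro i j
    fin_cases i <;> fin_cases j <;> simp <;> linarith
  have : ∃ i : Fin 3, q i ≠ 0 := by
    by_contra hc
    push_neg at hc
    exact hq0 (by ext i; exact hc i)
  obtain ⟨i, hi⟩ := this
  refine ⟨p i / q i, ?_⟩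
  ext j
  have : (((p i / q i) • q : EuclideanSpace ℝ (Fin 3)) : Fin 3 → ℝ) j = (p i / q i) * q j := rfl
  rw [this]
  field_simp
  linarith [key j i]

lemma cross_zero_of_smul (q : EuclideanSpace ℝ (Fin 3)) (c : ℝ) :
    crossProduct (((c • q : EuclideanSpace ℝ (Fin 3))) : Fin 3 → ℝ) (q : Fin 3 → ℝ) = 0 := by
  have : ((c • q : EuclideanSpace ℝ (Fin 3)) : Fin 3 → ℝ) = c • (q : Fin 3 → ℝ) := rfl
  rw [this, LinearMap.map_smul, LinearMap.smul_apply, cross_self, smul_zero]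

theorem phi_commute_iff_parallel (p q : EuclideanSpace ℝ (Fin 3))
    (hp : ‖p‖ < 1) (hq : ‖q‖ < 1) :
    (∀ x : EuclideanSpace ℝ (Fin 3), ‖x‖ = 1 →
      phiMap p (phiMap q x) = phiMap q (phiMap p x)) ↔
    crossProduct (p : Fin 3 → ℝ) (q : Fin 3 → ℝ) = 0 := by
  constructor
  · intro hcomm
    by_cases hq0 : q = 0
    · subst hq0
      exact LinearMap.map_zero _
    · have hn : ‖q‖ ≠ 0 := norm_ne_zero_iff.2 hq0
      have hun : ‖(‖q‖⁻¹ • q : EuclideanSpace ℝ (Fin 3))‖ = 1 := by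
        rw [norm_smul, Real.norm_eq_abs, abs_inv, abs_norm, inv_mul_cancel₀ hn]
      have h := hcomm (‖q‖⁻¹ • q) hun
      rw [phiMap_fix q hq0] at h
      -- h : phiMap p (‖q‖⁻¹ • q) = phiMap q (phiMap p (‖q‖⁻¹ • q))
      set y := phiMap p (‖q‖⁻¹ • q) with hy
      have hyn : ‖y‖ = 1 := norm_phiMap p _ hp hun
      set t := (inner ℝ q y : ℝ) with ht
      have hDy : 0 < 1 + ‖q‖ ^ 2 + 2 * t := denom_pos q y hq hyn
      have htb : |t| < 1 := inner_abs_bound q y hq hyn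
      have hct : (0:ℝ) < 2 * (1 + t) := by
        have := neg_abs_le t
        linarith
      rw [phiMap, ← ht] at h
      rw [eq_comm, inv_smul_eq_iff₀ hDy.ne'] at h
      -- h : (1 - ‖q‖^2) • y + (2*(1+t)) • q = (1 + ‖q‖^2 + 2*t) • y
      have h3 : (2 * (1 + t)) • q = (2 * ‖q‖ ^ 2 + 2 * t) • y := by
        have e1 : (2 * ‖q‖ ^ 2 + 2 * t) • y
            = (1 + ‖q‖ ^ 2 + 2 * t) • y - (1 - ‖q‖ ^ 2) • y := by
          rw [← sub_smul]; congr 1; ring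
        rw [e1, ← h]; abel
      have h4 : q = ((2 * ‖q‖ ^ 2 + 2 * t) / (2 * (1 + t))) • y := by
        rw [div_eq_inv_mul, ← smul_smul, ← h3, smul_smul, inv_mul_cancel₀ hct.ne', one_smul]
      set μ := (2 * ‖q‖ ^ 2 + 2 * t) / (2 * (1 + t)) with hμdef
      have hμ : μ ≠ 0 := by
        intro h0
        rw [h0, zero_smul] at h4
        exact hq0 h4
      have h5 : y = μ⁻¹ • q := by
        rw [h4, smul_smul, inv_mul_cancel₀ hμ, one_smul]
      -- now extract p
      set ip := (inner ℝ p (‖q‖⁻¹ • q) : ℝ) with hip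
      have hDp : 0 < 1 + ‖p‖ ^ 2 + 2 * ip := denom_pos p _ hp hun
      have hipb : |ip| < 1 := inner_abs_bound p _ hp hun
      have hcp : (0:ℝ) < 2 * (1 + ip) := by
        have := neg_abs_le ip
        linarith
      have h6 : phiMap p (‖q‖⁻¹ • q) = μ⁻¹ • q := by rw [← hy, h5]
      rw [phiMap, ← hip, inv_smul_eq_iff₀ hDp.ne', smul_smul] at h6
      -- h6 : (1-‖p‖^2) • (‖q‖⁻¹ • q) + (2*(1+ip)) • p = ((1+‖p‖^2+2*ip) * μ⁻¹) • q
      rw [smul_smul] at h6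
      have h7 : (2 * (1 + ip)) • p
          = ((1 + ‖p‖ ^ 2 + 2 * ip) * μ⁻¹ - (1 - ‖p‖ ^ 2) * ‖q‖⁻¹) • q := by
        rw [sub_smul, ← h6]; abel
      have h8 : p = ((2 * (1 + ip))⁻¹ * ((1 + ‖p‖ ^ 2 + 2 * ip) * μ⁻¹ - (1 - ‖p‖ ^ 2) * ‖q‖⁻¹)) • q := by
        rw [← smul_smul, ← h7, smul_smul, inv_mul_cancel₀ hcp.ne', one_smul]
      rw [h8]
      exact cross_zero_of_smul q _
  · intro hcross x hx
    by_cases hq0 : q = 0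
    · subst hq0
      rw [phiMap_zero, phiMap_zero]
    · obtain ⟨c, hpc⟩ := exists_smul_of_cross_zero p q hq0 hcross
      subst hpc
      exact phiMap_smul_comm q c hq hp x hx
end

section
/- The two boosts along the same axis compose according to φ_{αn} ∘ φ_{βn} acting on null directions: for all 0 < α, β < 1 and unit n ∈ ℝ³, the matrix product (I + σ(αn))(I + σ(βn)) equals (1 + αβ)(I + σ(γn)) with γ = (α+β)/(1+αβ); consequently φ_{αn}(φ_{βn}(x)) = φ_{γn}(x) for all x ∈ S² (relativistic velocity addition). -/
open Matrix

set_option maxHeartbeats 2000000 in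
theorem velocity_addition (n : EuclideanSpace ℝ (Fin 3)) (hn : ‖n‖ = 1)
    (α β : ℝ) (hα0 : 0 < α) (hα1 : α < 1) (hβ0 : 0 < β) (hβ1 : β < 1) :
    (1 + pauliSigma (α • n)) * (1 + pauliSigma (β • n)) =
      ((1 + α * β : ℝ) : ℂ) • (1 + pauliSigma (((α + β) / (1 + α * β)) • n)) ∧
    (∀ x : EuclideanSpace ℝ (Fin 3), ‖x‖ = 1 →
      phiMap (α • n) (phiMap (β • n) x) = phiMap (((α + β) / (1 + α * β)) • n) x) := by
  constructor
  ·
    have hs : n 0 ^ 2 + n 1 ^ 2 + n 2 ^ 2 = 1 := by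
      have h : ‖n‖ ^ 2 = 1 := by rw [hn]; norm_num
      rw [EuclideanSpace.norm_eq, Real.sq_sqrt (by positivity)] at h
      simpa [Fin.sum_univ_three] using h
    have hsC : (n 0 : ℂ) ^ 2 + (n 1 : ℂ) ^ 2 + (n 2 : ℂ) ^ 2 = 1 := by
      have := congrArg (fun r : ℝ => (r : ℂ)) hs
      push_cast at this
      exact this
    have habR : (0:ℝ) < 1 + α * β := by nlinarith
    have hab : (1 + α * β : ℝ) ≠ 0 := ne_of_gt habR
    have hlin : ∀ c : ℝ, pauliSigma (c • n) = (c : ℂ) • pauliSigma n := by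
      intro c
      simp only [pauliSigma, PiLp.smul_apply, smul_eq_mul, Complex.ofReal_mul, smul_smul]
      module
    have hsq : pauliSigma n * pauliSigma n = 1 := by
      ext i j
      fin_cases i <;> fin_cases j <;>
        simp [pauliSigma, Matrix.mul_apply, Fin.sum_univ_two, Matrix.one_apply] <;>
        first
        | linear_combination hsC - ((n 1 : ℂ))^2 * Complex.I_sq
        | linear_combination hsC + ((n 1 : ℂ))^2 * Complex.I_sq
        | ring1
    rw [hlin, hlin, hlin]
    set S := pauliSigma n
    have expand : (1 + (α:ℂ) • S) * (1 + (β:ℂ) • S)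
        = 1 + ((α:ℂ) + β) • S + ((α:ℂ) * β) • (S * S) := by
      rw [mul_add, add_mul, add_mul, mul_one, mul_one, one_mul, smul_mul_smul_comm, add_smul]
      abel
    rw [expand, hsq]
    have hg : ((1 + α * β : ℝ) : ℂ) * (((α + β) / (1 + α * β) : ℝ) : ℂ) = (α:ℂ) + β := by
      have habC : ((1 + α * β : ℝ) : ℂ) ≠ 0 := by exact_mod_cast hab
      push_cast at habC ⊢
      field_simp
    rw [smul_add, smul_smul, hg]
    push_cast
    module
  ·
    have hnn : (inner ℝ n n : ℝ) = 1 := by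
      rw [real_inner_self_eq_norm_sq, hn]; norm_num
    have habR : (0:ℝ) < 1 + α * β := by nlinarith
    have key : ∀ (c : ℝ) (y : EuclideanSpace ℝ (Fin 3)), phiMap (c • n) y =
        ((1 + c ^ 2 + 2 * (c * (inner ℝ n y : ℝ)))⁻¹ * (1 - c ^ 2)) • y +
        ((1 + c ^ 2 + 2 * (c * (inner ℝ n y : ℝ)))⁻¹ * (2 * (1 + c * (inner ℝ n y : ℝ)) * c)) • n := by
      intro c y
      have hcn : ‖c • n‖ ^ 2 = c ^ 2 := by
        rw [norm_smul, hn, mul_one, Real.norm_eq_abs, sq_abs]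
      simp only [phiMap, real_inner_smul_left, hcn, smul_smul, smul_add]
    intro x hx
    have hinner : ∀ a b : ℝ, (inner ℝ n (a • x + b • n) : ℝ) = a * (inner ℝ n x : ℝ) + b := by
      intro a b
      simp only [inner_add_right, real_inner_smul_right, hnn, mul_one]
    have ht1 : -1 ≤ (inner ℝ n x : ℝ) := by
      have h := abs_real_inner_le_norm n x
      rw [hn, hx, mul_one] at h
      linarith [neg_abs_le (inner ℝ n x : ℝ)]
    set T : ℝ := (inner ℝ n x : ℝ) with hT
    have hγ0 : 0 < (α + β) / (1 + α * β) := div_pos (by linarith) habR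
    have hDβ0 : (0:ℝ) < 1 + β ^ 2 + 2 * (β * T) := by
      nlinarith [mul_nonneg hβ0.le (by linarith : (0:ℝ) ≤ T + 1)]
    have hNum : (0:ℝ) < (1 + α * β) ^ 2 + (α + β) ^ 2 + 2 * T * ((α + β) * (1 + α * β)) := by
      have hs1 : (0:ℝ) < (1 - α) * (1 - β) := by nlinarith
      nlinarith [mul_pos hs1 hs1,
        mul_nonneg (mul_nonneg (show (0:ℝ) ≤ T + 1 by linarith) (show (0:ℝ) ≤ α + β by linarith))
          (show (0:ℝ) ≤ 1 + α * β by linarith)]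
    have hDγ0 : (0:ℝ) < 1 + ((α + β) / (1 + α * β)) ^ 2 + 2 * ((α + β) / (1 + α * β) * T) := by
      have he : 1 + ((α + β) / (1 + α * β)) ^ 2 + 2 * ((α + β) / (1 + α * β) * T)
          = ((1 + α * β) ^ 2 + (α + β) ^ 2 + 2 * T * ((α + β) * (1 + α * β))) / (1 + α * β) ^ 2 := by
        field_simp
      rw [he]
      exact div_pos hNum (by positivity)
    rw [key β x, key α, hinner, key ((α + β) / (1 + α * β)) x, ← hT]
    have hnum : (1 + β ^ 2 + 2 * (β * T))⁻¹ * (1 - β ^ 2) * T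
        + (1 + β ^ 2 + 2 * (β * T))⁻¹ * (2 * (1 + β * T) * β)
        = ((1 + β ^ 2) * T + 2 * β) / (1 + β ^ 2 + 2 * (β * T)) := by
      field_simp
      ring
    rw [hnum]
    have hE : 1 + α ^ 2 + 2 * (α * (((1 + β ^ 2) * T + 2 * β) / (1 + β ^ 2 + 2 * (β * T))))
        = ((1 + α * β) ^ 2 + (α + β) ^ 2 + 2 * T * ((α + β) * (1 + α * β)))
          / (1 + β ^ 2 + 2 * (β * T)) := by
      have h1 : 1 + β ^ 2 + 2 * β * T ≠ 0 := by rw [mul_assoc]; exact hDβ0.ne'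
      field_simp
      ring
    rw [hE]
    have hDγe : 1 + ((α + β) / (1 + α * β)) ^ 2 + 2 * ((α + β) / (1 + α * β) * T)
        = ((1 + α * β) ^ 2 + (α + β) ^ 2 + 2 * T * ((α + β) * (1 + α * β))) / (1 + α * β) ^ 2 := by
      field_simp
    rw [hDγe]
    have h1 : 1 + β ^ 2 + 2 * β * T ≠ 0 := by rw [mul_assoc]; exact hDβ0.ne'
    generalize hN : (1 + α * β) ^ 2 + (α + β) ^ 2 + 2 * T * ((α + β) * (1 + α * β)) = N at hNum ⊢
    have h2 := hNum.ne'
    have h3 := habR.ne'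
    have h4 : 1 + β ^ 2 + β * 2 * T ≠ 0 := by
      rw [show 1 + β ^ 2 + β * 2 * T = 1 + β ^ 2 + 2 * (β * T) by ring]; exact hDβ0.ne'
    match_scalars
    · field_simp
      ring
    · field_simp
      ring
end
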